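/- arXiv:1906.00587 — 4 statements merged into one kernel-verified Lean document; each statement's English description precedes it below -/
import Mathlib

section
/- (PLR decomposition, existence and uniqueness combined) For every (d×d) real orthogonal matrix Q there exist a permutation matrix P, a unit lower triangular matrix L, and an invertible upper triangular matrix R with Q = P·L·R⁻¹; moreover, for this P the pair (L, R), with L unit lower triangular and R invertible upper triangular satisfying Q = P·L·R⁻¹, is unique. -/
open Matrix

/-- A real square matrix is orthogonal if `Qᵀ * Q = 1`. -/
def IsOrthogonalMat {d : ℕ} (Q : Matrix (Fin d) (Fin d) ℝ) : Prop :=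
  Qᵀ * Q = 1

/-- A matrix is unit lower triangular if it is lower triangular with all
diagonal entries equal to `1`. -/
def IsUnitLowerTriangular {d : ℕ} (L : Matrix (Fin d) (Fin d) ℝ) : Prop :=
  (∀ i j : Fin d, i < j → L i j = 0) ∧ (∀ i : Fin d, L i i = 1)

/-- A matrix is upper triangular if all entries below the diagonal vanish. -/
def IsUpperTriangular {d : ℕ} (R : Matrix (Fin d) (Fin d) ℝ) : Prop :=
  ∀ i j : Fin d, j < i → R i j = 0

/-- A permutation matrix is a 0–1 matrix with exactly one `1` in each row and
each column. -/
def IsPermutationMat {d : ℕ} (P : Matrix (Fin d) (Fin d) ℝ) : Prop :=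
  (∀ i j : Fin d, P i j = 0 ∨ P i j = 1) ∧
  (∀ i : Fin d, ∃! j : Fin d, P i j = 1) ∧
  (∀ j : Fin d, ∃! i : Fin d, P i j = 1)

namespace PLRaux

/-- The permutation matrix of a permutation `σ` (row `i` has a `1` in column `σ i`). -/
def permMat {d : ℕ} (σ : Equiv.Perm (Fin d)) : Matrix (Fin d) (Fin d) ℝ :=
  Matrix.of fun i j => if j = σ i then 1 else 0

lemma permMat_mul {d : ℕ} (σ : Equiv.Perm (Fin d)) (M : Matrix (Fin d) (Fin d) ℝ) (i j : Fin d) :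
    (permMat σ * M) i j = M (σ i) j := by
  simp [permMat, mul_apply]

lemma mul_permMat {d : ℕ} (σ : Equiv.Perm (Fin d)) (M : Matrix (Fin d) (Fin d) ℝ) (i j : Fin d) :
    (M * permMat σ) i j = M i (σ.symm j) := by
  simp only [permMat, mul_apply, Matrix.of_apply, mul_ite, mul_one, mul_zero]
  rw [Finset.sum_eq_single (σ.symm j)]
  · simp
  · intro k _ hk
    rw [if_neg]
    intro h
    exact hk (by simp [h])
  · simp

lemma permMat_trans {d : ℕ} (σ τ : Equiv.Perm (Fin d)) :
    permMat σ * permMat τ = permMat (σ.trans τ) := by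
  ext i j
  rw [permMat_mul]
  rfl

lemma permMat_refl {d : ℕ} : permMat (Equiv.refl (Fin d)) = 1 := by
  ext i j
  simp [permMat, one_apply, eq_comm]

lemma isPermutationMat_permMat {d : ℕ} (σ : Equiv.Perm (Fin d)) :
    IsPermutationMat (permMat σ) := by
  refine ⟨fun i j => ?_, fun i => ⟨σ i, ?_, fun j hj => ?_⟩, fun j => ⟨σ.symm j, ?_, fun i hi => ?_⟩⟩
  · simp only [permMat, Matrix.of_apply]
    split <;> simp
  · simp [permMat]
  · simp only [permMat, Matrix.of_apply] at hj
    by_contra h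
    rw [if_neg h] at hj
    exact zero_ne_one hj
  · simp [permMat]
  · simp only [permMat, Matrix.of_apply] at hi
    by_contra h
    rw [if_neg (fun hj => h (by simp [hj]))] at hi
    exact zero_ne_one hi

lemma lower_mul {d : ℕ} {A B : Matrix (Fin d) (Fin d) ℝ}
    (hA : ∀ i j : Fin d, i < j → A i j = 0) (hB : ∀ i j : Fin d, i < j → B i j = 0)
    (i j : Fin d) (hij : i < j) : (A * B) i j = 0 := by
  rw [mul_apply]
  apply Finset.sum_eq_zero
  intro k _
  rcases lt_or_ge k j with h | h
  · rw [hB k j h, mul_zero]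
  · rw [hA i k (lt_of_lt_of_le hij h), zero_mul]

lemma unitLower_mul {d : ℕ} {A B : Matrix (Fin d) (Fin d) ℝ}
    (hA : IsUnitLowerTriangular A) (hB : IsUnitLowerTriangular B) :
    IsUnitLowerTriangular (A * B) := by
  refine ⟨lower_mul hA.1 hB.1, fun i => ?_⟩
  rw [mul_apply, Finset.sum_eq_single i]
  · rw [hA.2, hB.2, one_mul]
  · intro k _ hk
    rcases lt_or_gt_of_ne hk with h | h
    · rw [hB.1 k i h, mul_zero]
    · rw [hA.1 i k h, zero_mul]
  · simp

lemma upper_mul {d : ℕ} {A B : Matrix (Fin d) (Fin d) ℝ}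
    (hA : _root_.IsUpperTriangular A) (hB : _root_.IsUpperTriangular B) :
    _root_.IsUpperTriangular (A * B) := by
  intro i j hij
  rw [mul_apply]
  apply Finset.sum_eq_zero
  intro k _
  rcases lt_or_ge k i with h | h
  · rw [hA i k h, zero_mul]
  · rw [hB k j (lt_of_lt_of_le hij h), mul_zero]

lemma upper_blockTriangular {d : ℕ} {R : Matrix (Fin d) (Fin d) ℝ}
    (hR : _root_.IsUpperTriangular R) : R.BlockTriangular id :=
  fun _ _ h => hR _ _ h

lemma unitLower_det {d : ℕ} {L : Matrix (Fin d) (Fin d) ℝ}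
    (hL : IsUnitLowerTriangular L) : L.det = 1 := by
  rw [Matrix.det_of_lowerTriangular L (fun i j h => hL.1 _ _ h)]
  simp [hL.2]

lemma upper_inv {d : ℕ} {R : Matrix (Fin d) (Fin d) ℝ}
    (hR : _root_.IsUpperTriangular R) (h : IsUnit R.det) : _root_.IsUpperTriangular R⁻¹ := by
  haveI := R.invertibleOfIsUnitDet h
  exact fun i j hij => Matrix.blockTriangular_inv_of_blockTriangular (upper_blockTriangular hR) hij

/-- Uniqueness of the LU decomposition with unit lower triangular `L`. -/
lemma LU_unique {d : ℕ} {L₁ U₁ L₂ U₂ : Matrix (Fin d) (Fin d) ℝ}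
    (hL₁ : IsUnitLowerTriangular L₁) (hU₁ : _root_.IsUpperTriangular U₁) (h₁ : IsUnit U₁.det)
    (hL₂ : IsUnitLowerTriangular L₂) (hU₂ : _root_.IsUpperTriangular U₂) (_h₂ : IsUnit U₂.det)
    (heq : L₁ * U₁ = L₂ * U₂) : L₁ = L₂ ∧ U₁ = U₂ := by
  have hdL₂ : IsUnit L₂.det := by rw [unitLower_det hL₂]; exact isUnit_one
  set X := L₂⁻¹ * L₁ with hX
  have hXU : X * U₁ = U₂ := by
    rw [hX, mul_assoc, heq, ← mul_assoc, Matrix.nonsing_inv_mul _ hdL₂, one_mul]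
  have hLX : L₂ * X = L₁ := Matrix.mul_nonsing_inv_cancel_left _ _ hdL₂
  -- X is lower triangular (zero above the diagonal)
  have hL₂inv : ∀ i j : Fin d, i < j → L₂⁻¹ i j = 0 := by
    have hupperT : _root_.IsUpperTriangular L₂ᵀ := fun i j h => hL₂.1 _ _ h
    have hdT : IsUnit L₂ᵀ.det := by rwa [Matrix.det_transpose]
    intro i j hij
    have := upper_inv hupperT hdT j i hij
    rwa [← Matrix.transpose_nonsing_inv, Matrix.transpose_apply] at this
  have hXlow : ∀ i j : Fin d, i < j → X i j = 0 := lower_mul hL₂inv hL₁.1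
  -- X is upper triangular
  have hXup : _root_.IsUpperTriangular X := by
    have : X = U₂ * U₁⁻¹ := by
      rw [← hXU, mul_assoc, Matrix.mul_nonsing_inv _ h₁, mul_one]
    rw [this]
    exact upper_mul hU₂ (upper_inv hU₁ h₁)
  -- X has unit diagonal
  have hXdiag : ∀ i : Fin d, X i i = 1 := by
    intro i
    have h1 : (L₂ * X) i i = 1 := by rw [hLX]; exact hL₁.2 i
    rw [mul_apply, Finset.sum_eq_single i] at h1
    · rwa [hL₂.2, one_mul] at h1
    · intro k _ hk
      rcases lt_or_gt_of_ne hk with h | h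
      · rw [hXlow k i h, mul_zero]
      · rw [hL₂.1 i k h, zero_mul]
    · simp
  have hX1 : X = 1 := by
    ext i j
    rcases lt_trichotomy i j with h | h | h
    · rw [hXlow i j h, Matrix.one_apply_ne (ne_of_lt h)]
    · rw [h, hXdiag, Matrix.one_apply_eq]
    · rw [hXup i j h, Matrix.one_apply_ne (ne_of_gt h)]
  constructor
  · rw [← hLX, hX1, mul_one]
  · rw [← hXU, hX1, one_mul]

/-- Bordered matrix `[[x, r], [0, A]]`. -/
def tri {n : ℕ} (x : ℝ) (r : Fin n → ℝ) (A : Matrix (Fin n) (Fin n) ℝ) :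
    Matrix (Fin (n + 1)) (Fin (n + 1)) ℝ :=
  Matrix.of fun i j =>
    Fin.cases (Fin.cases x r j) (fun i' => Fin.cases 0 (fun j' => A i' j') j) i

@[simp] lemma tri_zero_zero {n : ℕ} (x : ℝ) (r : Fin n → ℝ) (A : Matrix (Fin n) (Fin n) ℝ) :
    tri x r A 0 0 = x := rfl

@[simp] lemma tri_zero_succ {n : ℕ} (x : ℝ) (r : Fin n → ℝ) (A : Matrix (Fin n) (Fin n) ℝ)
    (j : Fin n) : tri x r A 0 j.succ = r j := by simp [tri]

@[simp] lemma tri_succ_zero {n : ℕ} (x : ℝ) (r : Fin n → ℝ) (A : Matrix (Fin n) (Fin n) ℝ)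
    (i : Fin n) : tri x r A i.succ 0 = 0 := by simp [tri]

@[simp] lemma tri_succ_succ {n : ℕ} (x : ℝ) (r : Fin n → ℝ) (A : Matrix (Fin n) (Fin n) ℝ)
    (i j : Fin n) : tri x r A i.succ j.succ = A i j := by simp [tri]

lemma det_tri {n : ℕ} (x : ℝ) (r : Fin n → ℝ) (A : Matrix (Fin n) (Fin n) ℝ) :
    (tri x r A).det = x * A.det := by
  rw [Matrix.det_succ_column_zero, Fin.sum_univ_succ]
  have h0 : ((tri x r A).submatrix (Fin.succAbove 0) Fin.succ) = A := by
    ext i j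
    simp [Fin.succAbove_zero]
  rw [h0]
  simp

lemma tri_unitLower {n : ℕ} {A : Matrix (Fin n) (Fin n) ℝ} (hA : IsUnitLowerTriangular A) :
    IsUnitLowerTriangular (tri 1 (0 : Fin n → ℝ) A) := by
  constructor
  · intro i j hij
    rcases Fin.eq_zero_or_eq_succ j with rfl | ⟨j', rfl⟩
    · exact absurd hij (Fin.not_lt_zero i)
    rcases Fin.eq_zero_or_eq_succ i with rfl | ⟨i', rfl⟩
    · simp
    · rw [tri_succ_succ]
      exact hA.1 _ _ (Fin.succ_lt_succ_iff.mp hij)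
  · intro i
    rcases Fin.eq_zero_or_eq_succ i with rfl | ⟨i', rfl⟩
    · rfl
    · rw [tri_succ_succ]; exact hA.2 i'

lemma tri_upper {n : ℕ} (x : ℝ) (r : Fin n → ℝ) {A : Matrix (Fin n) (Fin n) ℝ}
    (hA : _root_.IsUpperTriangular A) : _root_.IsUpperTriangular (tri x r A) := by
  intro i j hij
  rcases Fin.eq_zero_or_eq_succ i with rfl | ⟨i', rfl⟩
  · exact absurd hij (Fin.not_lt_zero j)
  rcases Fin.eq_zero_or_eq_succ j with rfl | ⟨j', rfl⟩
  · simp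
  · rw [tri_succ_succ]
    exact hA _ _ (Fin.succ_lt_succ_iff.mp hij)

/-- Existence of a PLU decomposition for any invertible real matrix. -/
lemma exists_PLU : ∀ (n : ℕ) (M : Matrix (Fin n) (Fin n) ℝ), M.det ≠ 0 →
    ∃ (σ : Equiv.Perm (Fin n)) (L U : Matrix (Fin n) (Fin n) ℝ),
      IsUnitLowerTriangular L ∧ _root_.IsUpperTriangular U ∧ U.det ≠ 0 ∧
      M = permMat σ * L * U := by
  intro n
  induction n with
  | zero =>
    intro M _
    refine ⟨Equiv.refl _, 1, 1, ?_, ?_, ?_, ?_⟩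
    · exact ⟨fun i => i.elim0, fun i => i.elim0⟩
    · exact fun i => i.elim0
    · simp
    · ext i j; exact i.elim0
  | succ n IH =>
    intro M hM
    -- find a nonzero pivot in the first column
    obtain ⟨i0, hi0⟩ : ∃ i, M i 0 ≠ 0 := by
      by_contra h
      push_neg at h
      exact hM (Matrix.det_eq_zero_of_column_eq_zero 0 h)
    set τ : Equiv.Perm (Fin (n + 1)) := Equiv.swap 0 i0 with hτ
    set N : Matrix (Fin (n + 1)) (Fin (n + 1)) ℝ := permMat τ * M with hNdef
    have hMN : M = permMat τ * N := by
      rw [hNdef, ← mul_assoc, permMat_trans, Equiv.swap_swap, permMat_refl, one_mul]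
    have hN : N.det ≠ 0 := by
      intro h
      apply hM
      rw [hMN, Matrix.det_mul, h, mul_zero]
    have ha : N 0 0 ≠ 0 := by
      rw [hNdef, permMat_mul]
      rwa [hτ, Equiv.swap_apply_left]
    set a : ℝ := N 0 0 with haa
    set c : Fin (n + 1) → ℝ := fun i => N i 0 / a with hc
    set bb : Fin n → ℝ := fun j => N 0 j.succ with hbb
    set N' : Matrix (Fin n) (Fin n) ℝ :=
      Matrix.of (fun i j => N i.succ j.succ - c i.succ * N 0 j.succ) with hN'
    set E : Matrix (Fin (n + 1)) (Fin (n + 1)) ℝ :=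
      Matrix.of (fun i j => if j = 0 then c i else if i = j then 1 else 0) with hE
    have hc0 : c 0 = 1 := by rw [hc]; exact div_self ha
    have hE_ULT : IsUnitLowerTriangular E := by
      constructor
      · intro i j hij
        have hj0 : j ≠ 0 := fun h => absurd (h ▸ hij) (Fin.not_lt_zero i)
        simp only [hE, Matrix.of_apply, if_neg hj0, if_neg (ne_of_lt hij)]
      · intro i
        by_cases h : i = 0
        · simp [hE, h, hc0]
        · simp [hE, h]
    have hNEF : N = E * tri a bb N' := by
      ext i j
      rw [mul_apply, Fin.sum_univ_succ]
      have hE0 : E i 0 = c i := by simp [hE]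
      rcases Fin.eq_zero_or_eq_succ i with rfl | ⟨i', rfl⟩
      · have hrest : ∀ k : Fin n, E 0 k.succ * tri a bb N' k.succ j = 0 := by
          intro k
          have : E 0 k.succ = 0 := by
            rw [hE]
            simp only [Matrix.of_apply]
            rw [if_neg (Fin.succ_ne_zero k), if_neg (fun h => Fin.succ_ne_zero k h.symm)]
          rw [this, zero_mul]
        rw [Finset.sum_eq_zero (fun k _ => hrest k), add_zero, hE0, hc0, one_mul]
        rcases Fin.eq_zero_or_eq_succ j with rfl | ⟨j', rfl⟩
        · rw [tri_zero_zero]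
        · rw [tri_zero_succ]
      · have hrest : ∀ k : Fin n, E i'.succ k.succ * tri a bb N' k.succ j
            = (if i' = k then 1 else 0) * tri a bb N' k.succ j := by
          intro k
          congr 1
          simp [hE, Fin.succ_ne_zero k, Fin.succ_inj]
        rw [Finset.sum_congr rfl (fun k _ => hrest k)]
        simp only [ite_mul, one_mul, zero_mul]
        rw [Finset.sum_ite_eq (Finset.univ) i' (fun k => tri a bb N' k.succ j),
          if_pos (Finset.mem_univ i'), hE0]
        rcases Fin.eq_zero_or_eq_succ j with rfl | ⟨j', rfl⟩
        · rw [tri_zero_zero, tri_succ_zero, add_zero, hc, div_mul_cancel₀ _ ha]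
        · rw [tri_zero_succ, tri_succ_succ, hN']
          simp only [Matrix.of_apply, hbb]
          ring
    have hdetE : E.det = 1 := unitLower_det hE_ULT
    have hdetN' : N'.det ≠ 0 := by
      intro h
      apply hN
      rw [hNEF, Matrix.det_mul, hdetE, one_mul, det_tri, h, mul_zero]
    obtain ⟨σ', L', U', hL', hU', hdU', hfact⟩ := IH N' hdetN'
    set ρ : Equiv.Perm (Fin (n + 1)) := Equiv.Perm.decomposeFin.symm (0, σ') with hρ
    have hρ0 : ρ 0 = 0 := Equiv.Perm.decomposeFin_symm_apply_zero 0 σ'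
    have hρs : ∀ x : Fin n, ρ x.succ = (σ' x).succ := by
      intro x
      rw [hρ, Equiv.Perm.decomposeFin_symm_apply_succ, Equiv.swap_self]
      rfl
    have hρinv0 : ρ.symm 0 = 0 := by
      rw [Equiv.symm_apply_eq, hρ0]
    -- Claim A: bordering commutes with the block permutation
    have claimA : ∀ X : Matrix (Fin n) (Fin n) ℝ,
        tri a bb (permMat σ' * X) = permMat ρ * tri a bb X := by
      intro X
      ext i j
      rw [permMat_mul]
      rcases Fin.eq_zero_or_eq_succ i with rfl | ⟨i', rfl⟩
      · rw [hρ0]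
        rcases Fin.eq_zero_or_eq_succ j with rfl | ⟨j', rfl⟩
        · rw [tri_zero_zero, tri_zero_zero]
        · rw [tri_zero_succ, tri_zero_succ]
      · rw [hρs]
        rcases Fin.eq_zero_or_eq_succ j with rfl | ⟨j', rfl⟩
        · rw [tri_succ_zero, tri_succ_zero]
        · rw [tri_succ_succ, tri_succ_succ, permMat_mul]
    -- Claim B: bordering splits into triangular factors
    have claimB : tri a bb (L' * U') = tri 1 (0 : Fin n → ℝ) L' * tri a bb U' := by
      ext i j
      rw [mul_apply, Fin.sum_univ_succ]
      rcases Fin.eq_zero_or_eq_succ i with rfl | ⟨i', rfl⟩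
      · rw [tri_zero_zero]
        have : ∀ k : Fin n, tri (1:ℝ) 0 L' 0 k.succ * tri a bb U' k.succ j = 0 := by
          intro k; rw [tri_zero_succ]; simp
        rw [Finset.sum_eq_zero (fun k _ => this k), add_zero, one_mul]
        rcases Fin.eq_zero_or_eq_succ j with rfl | ⟨j', rfl⟩
        · rw [tri_zero_zero, tri_zero_zero]
        · rw [tri_zero_succ, tri_zero_succ]
      · rw [tri_succ_zero, zero_mul, zero_add]
        rcases Fin.eq_zero_or_eq_succ j with rfl | ⟨j', rfl⟩
        · rw [tri_succ_zero]
          refine (Finset.sum_eq_zero fun k _ => ?_).symm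
          rw [tri_succ_zero, mul_zero]
        · rw [tri_succ_succ, mul_apply]
          refine Finset.sum_congr rfl fun k _ => ?_
          rw [tri_succ_succ, tri_succ_succ]
    -- Claim C: conjugated elimination matrix
    set E' : Matrix (Fin (n + 1)) (Fin (n + 1)) ℝ :=
      Matrix.of (fun i j => if j = 0 then c (ρ.symm i) else if i = j then 1 else 0) with hE'
    have hE'_ULT : IsUnitLowerTriangular E' := by
      constructor
      · intro i j hij
        have hj0 : j ≠ 0 := fun h => absurd (h ▸ hij) (Fin.not_lt_zero i)
        simp only [hE', Matrix.of_apply, if_neg hj0, if_neg (ne_of_lt hij)]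
      · intro i
        by_cases h : i = 0
        · simp [hE', h, hρinv0, hc0]
        · simp [hE', h]
    have claimC : E * permMat ρ = permMat ρ * E' := by
      ext i j
      rw [mul_permMat, permMat_mul]
      have h1 : (ρ.symm j = 0) ↔ (j = 0) := by
        constructor
        · intro h; rw [← Equiv.apply_symm_apply ρ j, h, hρ0]
        · intro h; rw [h, hρinv0]
      have h2 : (i = ρ.symm j) ↔ (ρ i = j) := by
        rw [Equiv.eq_symm_apply]
      simp only [hE, hE', Matrix.of_apply, Equiv.symm_apply_apply]
      by_cases hj : j = 0
      · rw [if_pos (h1.mpr hj), if_pos hj]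
      · rw [if_neg (fun h => hj (h1.mp h)), if_neg hj]
        by_cases hij : ρ i = j
        · rw [if_pos (h2.mpr hij), if_pos hij]
        · rw [if_neg (fun h => hij (h2.mp h)), if_neg hij]
    -- Assemble
    refine ⟨τ.trans ρ, E' * tri 1 (0 : Fin n → ℝ) L', tri a bb U',
      unitLower_mul hE'_ULT (tri_unitLower hL'), tri_upper a bb hU', ?_, ?_⟩
    · rw [det_tri]
      exact mul_ne_zero ha hdU'
    · rw [hMN, hNEF, hfact, mul_assoc (permMat σ'), claimA, claimB,
        ← mul_assoc E, claimC, ← permMat_trans]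
      noncomm_ring

end PLRaux

open PLRaux

/-- (PLR decomposition, existence and uniqueness combined) Every real
orthogonal matrix `Q` can be written as `Q = P * L * R⁻¹` with `P` a
permutation matrix, `L` unit lower triangular and `R` invertible upper
triangular; moreover, for this `P` the pair `(L, R)` is unique. -/
theorem plr_decomposition_exists_unique {d : ℕ}
    (Q : Matrix (Fin d) (Fin d) ℝ) (hQ : IsOrthogonalMat Q) :
    ∃ P : Matrix (Fin d) (Fin d) ℝ, IsPermutationMat P ∧
      ∃! LR : Matrix (Fin d) (Fin d) ℝ × Matrix (Fin d) (Fin d) ℝ,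
        IsUnitLowerTriangular LR.1 ∧ _root_.IsUpperTriangular LR.2 ∧
        IsUnit LR.2 ∧ Q = P * LR.1 * LR.2⁻¹ := by
  have hdet : IsUnit Q.det := Matrix.isUnit_det_of_left_inverse hQ
  obtain ⟨σ, L, U, hL, hU, hdU, hfact⟩ := exists_PLU d Q hdet.ne_zero
  have hdUu : IsUnit U.det := isUnit_iff_ne_zero.mpr hdU
  refine ⟨permMat σ, isPermutationMat_permMat σ, (L, U⁻¹), ⟨hL, ?_, ?_, ?_⟩, ?_⟩
  · exact upper_inv hU hdUu
  · rw [Matrix.isUnit_iff_isUnit_det]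
    exact Matrix.isUnit_nonsing_inv_det U hdUu
  · show Q = permMat σ * L * (U⁻¹)⁻¹
    rw [Matrix.nonsing_inv_nonsing_inv U hdUu]
    exact hfact
  · rintro ⟨L₂, R₂⟩ ⟨h1, h2, h3, h4⟩
    have hdR₂ : IsUnit R₂.det := (Matrix.isUnit_iff_isUnit_det R₂).mp h3
    have hPinv : permMat σ.symm * permMat σ = 1 := by
      rw [permMat_trans, Equiv.symm_trans_self, permMat_refl]
    have e : permMat σ * (L₂ * R₂⁻¹) = permMat σ * (L * U) := by
      rw [← mul_assoc, ← h4, hfact, mul_assoc]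
    have key : L₂ * R₂⁻¹ = L * U := by
      calc L₂ * R₂⁻¹ = (permMat σ.symm * permMat σ) * (L₂ * R₂⁻¹) := by rw [hPinv, one_mul]
        _ = permMat σ.symm * (permMat σ * (L₂ * R₂⁻¹)) := by rw [mul_assoc]
        _ = permMat σ.symm * (permMat σ * (L * U)) := by rw [e]
        _ = (permMat σ.symm * permMat σ) * (L * U) := by rw [mul_assoc]
        _ = L * U := by rw [hPinv, one_mul]
    have hR₂invU : IsUnit (R₂⁻¹).det := Matrix.isUnit_nonsing_inv_det R₂ hdR₂
    obtain ⟨hLeq, hUeq⟩ := LU_unique h1 (upper_inv h2 hdR₂) hR₂invU hL hU hdUu key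
    have hR : R₂ = U⁻¹ := by rw [← hUeq, Matrix.nonsing_inv_nonsing_inv R₂ hdR₂]
    exact Prod.ext hLeq hR
end

section
/- (Positivity constraint for the leptokurtic-normal kurtosis weight) Let d ≥ 1 be an integer. If 0 ≤ β ≤ 4d, then q(y; β) ≥ 0 for every y ≥ 0. Conversely, if β > 4d, then there exists y ≥ 0 with q(y; β) < 0. -/
/-- The leptokurtic-normal kurtosis weight
`q(y; β) = 1 + (β / (8 d (d+2))) (y² − 2(d+2)y + d(d+2))`. -/
noncomputable def lnWeight (d : ℕ) (β y : ℝ) : ℝ :=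
  1 + β / (8 * (d : ℝ) * ((d : ℝ) + 2)) *
    (y ^ 2 - 2 * ((d : ℝ) + 2) * y + (d : ℝ) * ((d : ℝ) + 2))

/-- (Positivity constraint for the leptokurtic-normal kurtosis weight) For
`d ≥ 1`: if `0 ≤ β ≤ 4d` then `q(y; β) ≥ 0` for all `y ≥ 0`; conversely, if
`β > 4d` then `q(y; β) < 0` for some `y ≥ 0`. -/
theorem lnWeight_nonneg_iff (d : ℕ) (hd : 1 ≤ d) (β : ℝ) :
    ((0 ≤ β ∧ β ≤ 4 * (d : ℝ)) → ∀ y : ℝ, 0 ≤ y → 0 ≤ lnWeight d β y) ∧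
    (4 * (d : ℝ) < β → ∃ y : ℝ, 0 ≤ y ∧ lnWeight d β y < 0) := by
  set D : ℝ := (d : ℝ) with hDdef
  have hD : (1 : ℝ) ≤ D := by rw [hDdef]; exact_mod_cast hd
  have hDpos : 0 < D := lt_of_lt_of_le one_pos hD
  have hD2 : 0 < D + 2 := by linarith
  have h8 : (0:ℝ) < 8 * D * (D + 2) := by positivity
  have h4 : (0:ℝ) < 4 * D := by linarith
  have key : ∀ y : ℝ, lnWeight d β y =
      (1 - β / (4 * D)) + β / (8 * D * (D + 2)) * (y - (D + 2)) ^ 2 := by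
    intro y
    unfold lnWeight
    rw [← hDdef]
    field_simp
    ring
  constructor
  · rintro ⟨hβ0, hβ4⟩ y _
    rw [key y]
    have h1 : β / (4 * D) ≤ 1 := (div_le_one h4).mpr hβ4
    have h2 : 0 ≤ β / (8 * D * (D + 2)) * (y - (D + 2)) ^ 2 := by positivity
    linarith
  · intro hβ
    refine ⟨D + 2, by linarith, ?_⟩
    rw [key (D + 2)]
    have h1 : 1 < β / (4 * D) := (one_lt_div h4).mpr hβ
    simp only [sub_self, zero_pow, mul_zero]
    · linarith
end

section
/- (Covariance identity for the standard leptokurtic-normal density) Let d ≥ 1 be an integer and β be any real number. Then ∫_{ℝ^d} ‖x‖² · q(‖x‖²; β) · φ_d(x) dx = d, where ‖x‖ is the Euclidean norm on ℝ^d; in particular the weight q does not alter the second moments of the standard normal density. -/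
open Real MeasureTheory

/-- The standard `d`-variate normal density
`φ_d(x) = (2π)^{−d/2} exp(−‖x‖²/2)`. -/
noncomputable def stdNormalPdf (d : ℕ) (x : EuclideanSpace ℝ (Fin d)) : ℝ :=
  (2 * π) ^ (-(d : ℝ) / 2) * Real.exp (-‖x‖ ^ 2 / 2)

/-- Auxiliary radial Gaussian moment integral. -/
noncomputable def lnG (s : ℝ) : ℝ :=
  ∫ y in Set.Ioi (0 : ℝ), y ^ s * Real.exp (-(1/2) * y ^ 2)

lemma lnG_eq {s : ℝ} (hs : -1 < s) :
    lnG s = (1/2 : ℝ) ^ (-(s + 1) / 2) * (1/2) * Real.Gamma ((s + 1) / 2) := by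
  rw [lnG, ← integral_rpow_mul_exp_neg_mul_rpow (by norm_num : (0:ℝ) < 2) hs
    (by norm_num : (0:ℝ) < 1/2)]
  refine setIntegral_congr_fun measurableSet_Ioi fun y hy => ?_
  rw [show ((2:ℝ)) = ((2:ℕ):ℝ) by norm_num, Real.rpow_natCast]

lemma lnG_int {s : ℝ} (hs : -1 < s) :
    IntegrableOn (fun y : ℝ => y ^ s * Real.exp (-(1/2) * y ^ 2)) (Set.Ioi 0) :=
  integrableOn_rpow_mul_exp_neg_mul_sq (by norm_num) hs

lemma lnG_step {s : ℝ} (hs : -1 < s) : lnG (s + 2) = (s + 1) * lnG s := by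
  rw [lnG_eq (by linarith), lnG_eq hs]
  have h0 : (0:ℝ) < s + 1 := by linarith
  have h1 : (s + 2 + 1) / 2 = (s + 1) / 2 + 1 := by ring
  rw [h1, Real.Gamma_add_one (by positivity)]
  have h2 : (1/2 : ℝ) ^ (-(s + 2 + 1) / 2) = (1/2 : ℝ) ^ (-(s + 1) / 2) * (1/2 : ℝ) ^ (-1 : ℝ) := by
    rw [← Real.rpow_add (by norm_num)]; ring_nf
  rw [h2, Real.rpow_neg_one]
  norm_num
  ring

/-- (Covariance identity for the standard leptokurtic-normal density) For every
`d ≥ 1` and every real `β`, `∫ ‖x‖² q(‖x‖²; β) φ_d(x) dx = d`: the weight `q`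
does not alter the second moments of the standard normal density. -/
theorem lnDensity_second_moment (d : ℕ) (hd : 1 ≤ d) (β : ℝ) :
    ∫ x : EuclideanSpace ℝ (Fin d),
      ‖x‖ ^ 2 * (lnWeight d β (‖x‖ ^ 2) * stdNormalPdf d x) = (d : ℝ) := by
  haveI : Nonempty (Fin d) := Fin.pos_iff_nonempty.mp hd
  haveI : Nontrivial (EuclideanSpace ℝ (Fin d)) :=
    inferInstanceAs (Nontrivial (PiLp 2 fun _ : Fin d => ℝ))
  have hd1 : (1:ℝ) ≤ (d:ℝ) := by exact_mod_cast hd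
  have hdc : ((d - 1 : ℕ) : ℝ) = (d:ℝ) - 1 := by
    rw [Nat.cast_sub hd, Nat.cast_one]
  set κ := (volume (Metric.ball (0 : EuclideanSpace ℝ (Fin d)) 1)).toReal with hκ
  set c : ℝ := β / (8 * (d:ℝ) * ((d:ℝ) + 2)) with hc
  -- Gaussian normalization
  have h0 : ∫ x : EuclideanSpace ℝ (Fin d), Real.exp (-(1/2) * ‖x‖ ^ 2)
      = (2 * π) ^ ((d:ℝ) / 2) := by
    rw [GaussianFourier.integral_rexp_neg_mul_sq_norm (by norm_num : (0:ℝ) < 1/2),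
      finrank_euclideanSpace_fin, show π / (1/2 : ℝ) = 2 * π by ring]
  -- radial form of the normalization
  have h1 : ∫ x : EuclideanSpace ℝ (Fin d), Real.exp (-(1/2) * ‖x‖ ^ 2)
      = (d:ℝ) * κ * lnG ((d:ℝ) - 1) := by
    rw [show (fun x : EuclideanSpace ℝ (Fin d) => Real.exp (-(1/2) * ‖x‖ ^ 2))
        = (fun x => (fun y : ℝ => Real.exp (-(1/2) * y ^ 2)) ‖x‖) from rfl,
      MeasureTheory.integral_fun_norm_addHaar volume
        (fun y : ℝ => Real.exp (-(1/2) * y ^ 2)), finrank_euclideanSpace_fin]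
    have : ∫ y in Set.Ioi (0:ℝ), y ^ (d - 1) • Real.exp (-(1/2) * y ^ 2)
        = lnG ((d:ℝ) - 1) := by
      refine setIntegral_congr_fun measurableSet_Ioi fun y hy => ?_
      rw [smul_eq_mul, ← Real.rpow_natCast y (d - 1), hdc]
    rw [this, nsmul_eq_mul, smul_eq_mul, mul_assoc]
    rfl
  have κnorm : (d:ℝ) * κ * lnG ((d:ℝ) - 1) = (2 * π) ^ ((d:ℝ) / 2) := by
    rw [← h1, h0]
  -- rewrite integrand radially
  set f : ℝ → ℝ := fun r =>
    r ^ 2 * (lnWeight d β (r ^ 2) * ((2 * π) ^ (-(d:ℝ) / 2) * Real.exp (-(1/2) * r ^ 2)))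
    with hf
  have hfx : ∀ x : EuclideanSpace ℝ (Fin d),
      ‖x‖ ^ 2 * (lnWeight d β (‖x‖ ^ 2) * stdNormalPdf d x) = f ‖x‖ := by
    intro x
    rw [hf, stdNormalPdf, show -‖x‖ ^ 2 / 2 = -(1/2) * ‖x‖ ^ 2 by ring]
  simp_rw [hfx]
  rw [MeasureTheory.integral_fun_norm_addHaar volume f, finrank_euclideanSpace_fin]
  -- integrability of the three radial pieces
  have hs1 : (-1:ℝ) < (d:ℝ) + 1 := by linarith
  have hs2 : (-1:ℝ) < (d:ℝ) + 3 := by linarith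
  have hs3 : (-1:ℝ) < (d:ℝ) + 5 := by linarith
  have i1 : IntegrableOn (fun y : ℝ =>
      (1 + c * (d:ℝ) * ((d:ℝ) + 2)) * (y ^ ((d:ℝ) + 1) * Real.exp (-(1/2) * y ^ 2)))
      (Set.Ioi 0) := (lnG_int hs1).const_mul _
  have i2 : IntegrableOn (fun y : ℝ =>
      (-2 * ((d:ℝ) + 2) * c) * (y ^ ((d:ℝ) + 3) * Real.exp (-(1/2) * y ^ 2)))
      (Set.Ioi 0) := (lnG_int hs2).const_mul _
  have i3 : IntegrableOn (fun y : ℝ =>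
      c * (y ^ ((d:ℝ) + 5) * Real.exp (-(1/2) * y ^ 2)))
      (Set.Ioi 0) := (lnG_int hs3).const_mul _
  -- the radial integral
  have hrad : ∫ y in Set.Ioi (0:ℝ), y ^ (d - 1) • f y
      = (2 * π) ^ (-(d:ℝ) / 2) *
        ((1 + c * (d:ℝ) * ((d:ℝ) + 2)) * lnG ((d:ℝ) + 1)
          + (-2 * ((d:ℝ) + 2) * c) * lnG ((d:ℝ) + 3) + c * lnG ((d:ℝ) + 5)) := by
    have step : ∫ y in Set.Ioi (0:ℝ), y ^ (d - 1) • f y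
        = ∫ y in Set.Ioi (0:ℝ), (2 * π) ^ (-(d:ℝ) / 2) *
            ((1 + c * (d:ℝ) * ((d:ℝ) + 2)) * (y ^ ((d:ℝ) + 1) * Real.exp (-(1/2) * y ^ 2))
              + (-2 * ((d:ℝ) + 2) * c) * (y ^ ((d:ℝ) + 3) * Real.exp (-(1/2) * y ^ 2))
              + c * (y ^ ((d:ℝ) + 5) * Real.exp (-(1/2) * y ^ 2))) := by
      refine setIntegral_congr_fun measurableSet_Ioi fun y hy => ?_
      have hy0 : (0:ℝ) < y := hy
      have e1 : y ^ ((d:ℝ) + 1) = y ^ (d - 1) * y ^ (2:ℕ) := by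
        rw [← Real.rpow_natCast y (d - 1), ← Real.rpow_natCast y 2,
          ← Real.rpow_add hy0, hdc]
        congr 1
        push_cast
        ring
      have e2 : y ^ ((d:ℝ) + 3) = y ^ (d - 1) * y ^ (4:ℕ) := by
        rw [← Real.rpow_natCast y (d - 1), ← Real.rpow_natCast y 4,
          ← Real.rpow_add hy0, hdc]
        congr 1
        push_cast
        ring
      have e3 : y ^ ((d:ℝ) + 5) = y ^ (d - 1) * y ^ (6:ℕ) := by
        rw [← Real.rpow_natCast y (d - 1), ← Real.rpow_natCast y 6,
          ← Real.rpow_add hy0, hdc]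
        congr 1
        push_cast
        ring
      simp only [e1, e2, e3, smul_eq_mul, hf, lnWeight, ← hc]
      ring
    have i12 : IntegrableOn (fun y : ℝ =>
        (1 + c * (d:ℝ) * ((d:ℝ) + 2)) * (y ^ ((d:ℝ) + 1) * Real.exp (-(1/2) * y ^ 2))
          + (-2 * ((d:ℝ) + 2) * c) * (y ^ ((d:ℝ) + 3) * Real.exp (-(1/2) * y ^ 2)))
        (Set.Ioi 0) := i1.add i2
    rw [step, MeasureTheory.integral_const_mul,
      MeasureTheory.integral_add i12 i3, MeasureTheory.integral_add i1 i2,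
      MeasureTheory.integral_const_mul, MeasureTheory.integral_const_mul,
      MeasureTheory.integral_const_mul]
    rfl
  rw [hrad]
  -- the Gaussian moment recursions
  have g1 : lnG ((d:ℝ) + 1) = (d:ℝ) * lnG ((d:ℝ) - 1) := by
    have := lnG_step (s := (d:ℝ) - 1) (by linarith)
    rw [show (d:ℝ) - 1 + 2 = (d:ℝ) + 1 by ring, show (d:ℝ) - 1 + 1 = (d:ℝ) by ring] at this
    exact this
  have g2 : lnG ((d:ℝ) + 3) = ((d:ℝ) + 2) * lnG ((d:ℝ) + 1) := by
    have := lnG_step (s := (d:ℝ) + 1) (by linarith)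
    rw [show (d:ℝ) + 1 + 2 = (d:ℝ) + 3 by ring, show (d:ℝ) + 1 + 1 = (d:ℝ) + 2 by ring] at this
    exact this
  have g3 : lnG ((d:ℝ) + 5) = ((d:ℝ) + 4) * lnG ((d:ℝ) + 3) := by
    have := lnG_step (s := (d:ℝ) + 3) (by linarith)
    rw [show (d:ℝ) + 3 + 2 = (d:ℝ) + 5 by ring, show (d:ℝ) + 3 + 1 = (d:ℝ) + 4 by ring] at this
    exact this
  rw [g3, g2, g1, nsmul_eq_mul, smul_eq_mul]
  have collapse : (1 + c * (d:ℝ) * ((d:ℝ) + 2)) * ((d:ℝ) * lnG ((d:ℝ) - 1))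
      + (-2 * ((d:ℝ) + 2) * c) * (((d:ℝ) + 2) * ((d:ℝ) * lnG ((d:ℝ) - 1)))
      + c * (((d:ℝ) + 4) * (((d:ℝ) + 2) * ((d:ℝ) * lnG ((d:ℝ) - 1))))
      = (d:ℝ) * lnG ((d:ℝ) - 1) := by ring
  rw [collapse]
  have : (d:ℝ) * (κ * ((2 * π) ^ (-(d:ℝ) / 2) * ((d:ℝ) * lnG ((d:ℝ) - 1))))
      = (2 * π) ^ (-(d:ℝ) / 2) * ((d:ℝ) * κ * lnG ((d:ℝ) - 1)) * (d:ℝ) := by ring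
  have hκr : volume.real (Metric.ball (0 : EuclideanSpace ℝ (Fin d)) 1) = κ := rfl
  rw [hκr]
  rw [this, κnorm, ← Real.rpow_add (by positivity),
    show -(d:ℝ) / 2 + (d:ℝ) / 2 = 0 by ring, Real.rpow_zero, one_mul]
end

section
/- (Excess kurtosis of the standard leptokurtic-normal density equals β) Let d ≥ 1 be an integer and β be any real number. Then ∫_{ℝ^d} ‖x‖⁴ · q(‖x‖²; β) · φ_d(x) dx = d(d+2) + β, where ‖x‖ is the Euclidean norm on ℝ^d; that is, the Mardia excess kurtosis of the density x ↦ q(‖x‖²; β)·φ_d(x) equals β. -/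
open Real MeasureTheory

open Set Filter

noncomputable def gm (m : ℕ) : ℝ := ∫ r in Ioi (0:ℝ), r ^ m * Real.exp (-r^2/2)

lemma gm_integrableOn (m : ℕ) :
    IntegrableOn (fun r : ℝ => r ^ m * Real.exp (-r^2/2)) (Ioi 0) := by
  have h := integrableOn_rpow_mul_exp_neg_mul_sq (b := 1/2) one_half_pos
    (s := (m : ℝ)) (lt_of_lt_of_le neg_one_lt_zero (Nat.cast_nonneg m))
  refine h.congr_fun (fun x hx => ?_) measurableSet_Ioi
  simp only [Real.rpow_natCast]
  ring_nf

lemma gm_tendsto (m : ℕ) :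
    Tendsto (fun r : ℝ => r ^ m * Real.exp (-r^2/2)) atTop (nhds 0) := by
  have hb : Tendsto (fun x : ℝ => -(1/2) * x) atTop atBot :=
    Tendsto.const_mul_atTop_of_neg (by norm_num) tendsto_id
  have h := (rpow_mul_exp_neg_mul_sq_isLittleO_exp_neg one_half_pos
    (m : ℝ)).tendsto_zero_of_tendsto (Real.tendsto_exp_atBot.comp hb)
  refine h.congr' ?_
  filter_upwards [eventually_gt_atTop (0:ℝ)] with x hx
  rw [Real.rpow_natCast]
  ring_nf

lemma gm_rec (m : ℕ) : gm (m + 2) = (m + 1) * gm m := by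
  have key : ∫ r in Ioi (0:ℝ),
      ((m+1:ℝ) * (r ^ m * Real.exp (-r^2/2)) - r ^ (m+2) * Real.exp (-r^2/2))
      = 0 - (0:ℝ) ^ (m+1) * Real.exp (-(0:ℝ)^2/2) := by
    apply integral_Ioi_of_hasDerivAt_of_tendsto'
      (f := fun r : ℝ => r ^ (m+1) * Real.exp (-r^2/2))
    · intro x _
      have h1 : HasDerivAt (fun r : ℝ => r ^ (m+1)) ((m+1:ℝ) * x ^ m) x := by
        simpa using hasDerivAt_pow (m+1) x
      have h0 : HasDerivAt (fun r : ℝ => -r^2/2) (-x) x := by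
        have : HasDerivAt (fun r : ℝ => -r^2/2) (-(((2:ℕ):ℝ) * x ^ (2 - 1)) / 2) x := (hasDerivAt_pow 2 x).neg.div_const 2
        convert this using 1
        simp; ring
      have h2 : HasDerivAt (fun r : ℝ => Real.exp (-r^2/2)) (Real.exp (-x^2/2) * (-x)) x :=
        h0.exp
      have : HasDerivAt (fun r : ℝ => r ^ (m+1) * Real.exp (-r^2/2)) ((m+1:ℝ) * x ^ m * Real.exp (-x^2/2) + x ^ (m+1) * (Real.exp (-x^2/2) * (-x))) x := h1.mul h2
      exact this.congr_deriv (by beta_reduce; ring)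
    · exact ((gm_integrableOn m).const_mul _).sub (gm_integrableOn (m+2))
    · exact gm_tendsto (m+1)
  have hsplit : ∫ r in Ioi (0:ℝ),
      ((m+1:ℝ) * (r ^ m * Real.exp (-r^2/2)) - r ^ (m+2) * Real.exp (-r^2/2))
      = (m+1:ℝ) * gm m - gm (m+2) := by
    rw [integral_sub ((gm_integrableOn m).const_mul _) (gm_integrableOn (m+2)),
      MeasureTheory.integral_const_mul]
    rfl
  rw [hsplit] at key
  simp at key
  linarith

/-- (Excess kurtosis of the standard leptokurtic-normal density equals `β`)
For every `d ≥ 1` and every real `β`,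
`∫ ‖x‖⁴ q(‖x‖²; β) φ_d(x) dx = d(d+2) + β`, i.e. the Mardia excess kurtosis of
the density `x ↦ q(‖x‖²; β) φ_d(x)` equals `β`. -/
theorem lnDensity_fourth_moment (d : ℕ) (hd : 1 ≤ d) (β : ℝ) :
    ∫ x : EuclideanSpace ℝ (Fin d),
      ‖x‖ ^ 4 * (lnWeight d β (‖x‖ ^ 2) * stdNormalPdf d x)
      = (d : ℝ) * ((d : ℝ) + 2) + β := by
  haveI : Nonempty (Fin d) := ⟨⟨0, hd⟩⟩
  set N : ℝ := (2 * π) ^ (-(d : ℝ) / 2) with hN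
  set c : ℝ := β / (8 * (d : ℝ) * ((d : ℝ) + 2)) with hc
  set V : ℝ := (volume (Metric.ball (0 : EuclideanSpace ℝ (Fin d)) 1)).toReal with hV
  have hdim : Module.finrank ℝ (EuclideanSpace ℝ (Fin d)) = d := finrank_euclideanSpace_fin
  -- polar coordinate formula for a general radial function
  have polar : ∀ g : ℝ → ℝ, ∫ x : EuclideanSpace ℝ (Fin d), g ‖x‖
      = (d : ℝ) * V * ∫ r in Ioi (0:ℝ), r ^ (d - 1) * g r := by
    intro g
    rw [MeasureTheory.integral_fun_norm_addHaar (volume : Measure (EuclideanSpace ℝ (Fin d))) g]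
    simp only [hdim, nsmul_eq_mul, smul_eq_mul]
    rw [mul_assoc]; rfl
  -- normalization: d * V * gm (d-1) = (2π)^(d/2)
  have hnorm : (d : ℝ) * V * gm (d - 1) = (2 * π) ^ ((d : ℝ) / 2) := by
    have h1 := polar (fun r => Real.exp (-(1/2) * r ^ 2))
    have h2 : ∫ x : EuclideanSpace ℝ (Fin d), Real.exp (-(1/2) * ‖x‖ ^ 2)
        = (π / (1/2)) ^ ((Module.finrank ℝ (EuclideanSpace ℝ (Fin d)) : ℝ) / 2 : ℝ) := by
      exact_mod_cast GaussianFourier.integral_rexp_neg_mul_sq_norm (by norm_num : (0:ℝ) < 1/2)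
    rw [h1] at h2
    rw [hdim] at h2
    have : (π / (1/2) : ℝ) = 2 * π := by ring
    rw [this] at h2
    rw [← h2]
    unfold gm
    congr 1
    exact integral_congr_ae (Eventually.of_forall fun r => by ring_nf)
  -- replace d by e + 1
  obtain ⟨e, rfl⟩ : ∃ e, d = e + 1 := ⟨d - 1, (Nat.succ_pred_eq_of_pos hd).symm⟩
  set a1 : ℝ := N * (1 + c * (e+1 : ℝ) * ((e+1 : ℝ) + 2)) with ha1
  set a2 : ℝ := N * (-(2 * c * ((e+1 : ℝ) + 2))) with ha2
  set a3 : ℝ := N * c with ha3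
  have hmain := polar (fun r => r ^ 4 * (lnWeight (e+1) β (r^2) * (N * Real.exp (-r^2/2))))
  have hLHS : ∫ x : EuclideanSpace ℝ (Fin (e+1)),
      ‖x‖ ^ 4 * (lnWeight (e+1) β (‖x‖ ^ 2) * stdNormalPdf (e+1) x)
      = ∫ x : EuclideanSpace ℝ (Fin (e+1)),
        (fun r => r ^ 4 * (lnWeight (e+1) β (r^2) * (N * Real.exp (-r^2/2)))) ‖x‖ := by
    refine integral_congr_ae (Eventually.of_forall fun x => ?_)
    simp [stdNormalPdf, hN]
  have hpt : ∀ r : ℝ, (r : ℝ) ^ ((e+1) - 1) *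
      (r ^ 4 * (lnWeight (e+1) β (r^2) * (N * Real.exp (-r^2/2))))
      = a1 * (r ^ (e+4) * Real.exp (-r^2/2)) + a2 * (r ^ (e+6) * Real.exp (-r^2/2))
        + a3 * (r ^ (e+8) * Real.exp (-r^2/2)) := by
    intro r
    simp only [Nat.add_sub_cancel, lnWeight, ha1, ha2, ha3, hc]
    push_cast
    have h8 : (8 * ((e:ℝ)+1) * (((e:ℝ)+1)+2)) ≠ 0 := by positivity
    field_simp
    ring
  have hinner : ∫ r in Ioi (0:ℝ), r ^ ((e+1) - 1) *
      (r ^ 4 * (lnWeight (e+1) β (r^2) * (N * Real.exp (-r^2/2))))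
      = a1 * gm (e+4) + a2 * gm (e+6) + a3 * gm (e+8) := by
    rw [integral_congr_ae (Eventually.of_forall fun r => hpt r)]
    have i4 : IntegrableOn (fun r : ℝ => a1 * (r ^ (e+4) * Real.exp (-r^2/2))) (Ioi 0) :=
      (gm_integrableOn (e+4)).const_mul a1
    have i6 : IntegrableOn (fun r : ℝ => a2 * (r ^ (e+6) * Real.exp (-r^2/2))) (Ioi 0) :=
      (gm_integrableOn (e+6)).const_mul a2
    have i8 : IntegrableOn (fun r : ℝ => a3 * (r ^ (e+8) * Real.exp (-r^2/2))) (Ioi 0) :=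
      (gm_integrableOn (e+8)).const_mul a3
    have i46 : IntegrableOn (fun r : ℝ => a1 * (r ^ (e+4) * Real.exp (-r^2/2))
        + a2 * (r ^ (e+6) * Real.exp (-r^2/2))) (Ioi 0) := i4.add i6
    rw [integral_add i46 i8, integral_add i4 i6,
      MeasureTheory.integral_const_mul, MeasureTheory.integral_const_mul,
      MeasureTheory.integral_const_mul]
    rfl
  -- gm recurrences
  have g4 : gm (e+4) = ((e:ℝ)+3) * (((e:ℝ)+1) * gm e) := by
    have h1 := gm_rec e
    have h2 := gm_rec (e+2)
    push_cast at h1 h2 ⊢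
    rw [show e+4 = (e+2)+2 by ring] at *
    rw [h2, h1]; ring
  have g6 : gm (e+6) = ((e:ℝ)+5) * gm (e+4) := by
    have h := gm_rec (e+4)
    rw [show e+6 = (e+4)+2 by ring, h]; push_cast; ring
  have g8 : gm (e+8) = ((e:ℝ)+7) * gm (e+6) := by
    have h := gm_rec (e+6)
    rw [show e+8 = (e+6)+2 by ring, h]; push_cast; ring
  have hNG : N * ((e+1 : ℕ) * V * gm ((e+1) - 1)) = 1 := by
    rw [hnorm, hN, ← Real.rpow_add (by positivity), neg_div, neg_add_cancel, Real.rpow_zero]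
  rw [hLHS, hmain, hinner]
  simp only [Nat.add_sub_cancel] at hNG
  rw [g6] at g8
  rw [g4] at g6 g8
  rw [g4, g6, g8, ha1, ha2, ha3]
  have hd0 : (((e+1:ℕ)):ℝ) ≠ 0 := by positivity
  have hd2 : (((e+1:ℕ)):ℝ) + 2 ≠ 0 := by positivity
  have hcb : c * (8 * (((e+1:ℕ)):ℝ) * ((((e+1:ℕ)):ℝ) + 2)) = β := by
    rw [hc]; field_simp
  push_cast at hNG hcb ⊢
  linear_combination (((e:ℝ)+1)*((e:ℝ)+3)*(1+8*c)) * hNG + hcb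
end
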